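/- arXiv:1309.0603 — 5 statements merged into one kernel-verified Lean document; each statement's English description precedes it below -/
import Mathlib

section
/- If A = A1 ∪ A2 is a separable γ-set of a finite simple graph G, with A1, A2 nonempty disjoint sets such that A1 dominates V(G) − A, then A2 is an independent set of G. -/
open SimpleGraph

variable {V : Type*}

/-- `D` is a dominating set of `G`: every vertex is in `D` or adjacent to a vertex of `D`. -/
def IsDomSet (G : SimpleGraph V) (D : Set V) : Prop :=
  ∀ v : V, ∃ d ∈ D, d = v ∨ G.Adj d v

/-- The domination number of `G`: minimum cardinality of a dominating set. -/
noncomputable def domNum (G : SimpleGraph V) : ℕ :=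
  sInf {n | ∃ D : Set V, IsDomSet G D ∧ D.ncard = n}

/-- The prism `πG` of `G`: two disjoint copies of `G` together with the matching
`{u (π u) : u ∈ V(G)}`, the second copy playing the role of `G'`. -/
def prism (G : SimpleGraph V) (π : Equiv.Perm V) : SimpleGraph (V ⊕ V) where
  Adj a b :=
    match a, b with
    | Sum.inl u, Sum.inl v => G.Adj u v
    | Sum.inr u, Sum.inr v => G.Adj u v
    | Sum.inl u, Sum.inr v => π u = v
    | Sum.inr u, Sum.inl v => π v = u
  symm := ⟨by
    rintro (u | u) (v | v) h
    · exact G.adj_symm h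
    · exact h
    · exact h
    · exact G.adj_symm h⟩
  loopless := ⟨by
    rintro (u | u) h
    · exact G.irrefl h
    · exact G.irrefl h⟩

/-- The closed neighborhood `N[v]` of a vertex. -/
def closedNbhd (G : SimpleGraph V) (v : V) : Set V :=
  insert v (G.neighborSet v)

/-- `x` is a `C₃`-free vertex: non-isolated and belonging to no triangle of `G`. -/
def C3Free (G : SimpleGraph V) (x : V) : Prop :=
  (∃ y, G.Adj x y) ∧ ∀ u v : V, G.Adj x u → G.Adj x v → ¬ G.Adj u v

/-- `A = A1 ∪ A2` is a separable γ-set of `G` (an `A1`-γ-set): `A1, A2` are nonempty,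
disjoint, `A` is a γ-set, and `A1` dominates `V(G) - A`. -/
def SepGammaSet (G : SimpleGraph V) (A1 A2 : Set V) : Prop :=
  A1.Nonempty ∧ A2.Nonempty ∧ Disjoint A1 A2 ∧
  IsDomSet G (A1 ∪ A2) ∧ (A1 ∪ A2).ncard = domNum G ∧
  ∀ v ∉ A1 ∪ A2, ∃ u ∈ A1, G.Adj u v

/-- The separable γ-set `A = A1 ∪ A2` is effective under `π`: `π(A)` is a γ-set of the
copy `G'` of `G` (identified with `G`) whose dominating part is `B2' = π(A2)`,
i.e. `π(A2)` dominates `V(G') - π(A)`. -/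
def Effective (G : SimpleGraph V) (π : Equiv.Perm V) (A1 A2 : Set V) : Prop :=
  IsDomSet G (⇑π '' (A1 ∪ A2)) ∧ (⇑π '' (A1 ∪ A2)).ncard = domNum G ∧
  ∀ v ∉ ⇑π '' (A1 ∪ A2), ∃ u ∈ ⇑π '' A2, G.Adj u v

/-- The star `K_{1,m}` on `Fin (m+1)`, with center `0` adjacent to the `m` leaves. -/
def starGraph (m : ℕ) : SimpleGraph (Fin (m + 1)) where
  Adj a b := (a = 0 ∧ b ≠ 0) ∨ (b = 0 ∧ a ≠ 0)
  symm := ⟨fun a b h => Or.symm h⟩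
  loopless := ⟨fun a h => by rcases h with ⟨h1, h2⟩ | ⟨h1, h2⟩ <;> exact h2 h1⟩

/-- in a separable γ-set `A = A1 ∪ A2`, the set `A2` is independent. -/
theorem sep_gamma_set_A2_independent [Fintype V] (G : SimpleGraph V) (A1 A2 : Set V)
    (h : SepGammaSet G A1 A2) :
    ∀ u ∈ A2, ∀ v ∈ A2, u ≠ v → ¬ G.Adj u v := by
  intro u hu v hv huv hadj
  obtain ⟨h1, h2, hdisj, hdom, hcard, hsep⟩ := h
  set D : Set V := (A1 ∪ A2) \ {u} with hD
  have hDdom : IsDomSet G D := by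
    intro w
    by_cases hwu : w = u
    · refine ⟨v, ⟨Or.inr hv, ?_⟩, Or.inr (hwu ▸ G.adj_symm hadj)⟩
      simp [huv.symm]
    · by_cases hwA : w ∈ A1 ∪ A2
      · exact ⟨w, ⟨hwA, hwu⟩, Or.inl rfl⟩
      · obtain ⟨a, ha, hadj'⟩ := hsep w hwA
        have hau : a ≠ u := fun h => hdisj.ne_of_mem ha hu h
        exact ⟨a, ⟨Or.inl ha, by simp [hau]⟩, Or.inr hadj'⟩
  have hle : domNum G ≤ D.ncard := Nat.sInf_le ⟨D, hDdom, rfl⟩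
  have hlt : D.ncard < (A1 ∪ A2).ncard :=
    Set.ncard_diff_singleton_lt_of_mem (Or.inr hu) (Set.toFinite _)
  omega
end

section
/- Let G be a finite simple graph and suppose the separable γ-set A = A1 ∪ A2 of G is effective under a permutation π of V(G), i.e., π(A) is a γ-set of the copy G' of G that can be separated with dominating part B2' = π(A2) (so π(A2) dominates V(G') − π(A)). Then B1' = π(A1) is an independent set of G', there is no edge of G' between π(A1) and π(A2), and π(A1) is a 2-packing of G'. -/
open SimpleGraph

variable {V : Type*}

/-- Observation 1: if a separable γ-set `A = A1 ∪ A2` is effective under `π`,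
then `B1' = π(A1)` is independent, `E(B1', B2') = ∅`, and `B1'` is a 2-packing of `G'`. -/
theorem effective_obs [Fintype V] (G : SimpleGraph V) (π : Equiv.Perm V) (A1 A2 : Set V)
    (hsep : SepGammaSet G A1 A2) (heff : Effective G π A1 A2) :
    (∀ u ∈ ⇑π '' A1, ∀ v ∈ ⇑π '' A1, u ≠ v → ¬ G.Adj u v) ∧
    (∀ u ∈ ⇑π '' A1, ∀ v ∈ ⇑π '' A2, ¬ G.Adj u v) ∧
    (∀ u ∈ ⇑π '' A1, ∀ v ∈ ⇑π '' A1, u ≠ v → closedNbhd G u ∩ closedNbhd G v = ∅) := by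
  obtain ⟨-, -, hdisj, -, -, -⟩ := hsep
  obtain ⟨hB, hBcard, hB2⟩ := heff
  set B : Set V := ⇑π '' (A1 ∪ A2) with hBdef
  have hle : ∀ D : Set V, IsDomSet G D → domNum G ≤ D.ncard := fun D hD =>
    Nat.sInf_le ⟨D, hD, rfl⟩
  have hsub1 : ⇑π '' A1 ⊆ B := Set.image_mono Set.subset_union_left
  have hsub2 : ⇑π '' A2 ⊆ B := Set.image_mono Set.subset_union_right
  have hd12 : ∀ y ∈ ⇑π '' A1, y ∉ ⇑π '' A2 := by
    rintro y ⟨a, ha, rfl⟩ ⟨b, hb, hba⟩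
    exact (Set.disjoint_left.mp hdisj ha) (π.injective hba ▸ hb)
  -- Key lemma: no vertex of B is adjacent to a vertex of π '' A1.
  have key : ∀ u ∈ ⇑π '' A1, ∀ w ∈ B, ¬ G.Adj w u := by
    intro u hu w hw hadj
    have hwu : w ≠ u := fun h => G.irrefl (v := u) (h ▸ hadj)
    have hdom : IsDomSet G (B \ {u}) := by
      intro v
      by_cases hvB : v ∈ B
      · by_cases hvu : v = u
        · exact ⟨w, ⟨hw, hwu⟩, Or.inr (hvu ▸ hadj)⟩
        · exact ⟨v, ⟨hvB, hvu⟩, Or.inl rfl⟩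
      · obtain ⟨u', hu', hadj'⟩ := hB2 v hvB
        exact ⟨u', ⟨hsub2 hu', fun h => hd12 u hu (h ▸ hu')⟩, Or.inr hadj'⟩
    have h1 := hle _ hdom
    have h2 : (B \ {u}).ncard = B.ncard - 1 :=
      Set.ncard_diff_singleton_of_mem (hsub1 hu)
    have h3 : 0 < B.ncard := (Set.ncard_pos (Set.toFinite B)).mpr ⟨u, hsub1 hu⟩
    omega
  have indep : ∀ u ∈ ⇑π '' A1, ∀ v ∈ ⇑π '' A1, u ≠ v → ¬ G.Adj u v :=
    fun u hu v hv _ hadj => key v hv u (hsub1 hu) hadj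
  refine ⟨indep, fun u hu v hv hadj => key u hu v (hsub2 hv) hadj.symm, ?_⟩
  intro u hu v hv huv
  by_contra hne
  obtain ⟨x, hxu, hxv⟩ := Set.nonempty_iff_ne_empty.mpr hne
  -- unravel closed neighborhood membership
  have hcase : ∀ y ∈ ⇑π '' A1, ∀ z, z ∈ closedNbhd G y → z = y ∨ G.Adj y z := by
    intro y _ z hz
    rcases hz with rfl | hz
    · exact Or.inl rfl
    · exact Or.inr hz
  rcases hcase u hu x hxu with h1' | haxu
  · rcases hcase v hv x hxv with h2' | haxv
    · exact huv (h1'.symm.trans h2')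
    · exact indep v hv u hu (Ne.symm huv) (h1' ▸ haxv)
  rcases hcase v hv x hxv with h2' | haxv
  · exact indep u hu v hv huv (h2' ▸ haxu)
  -- x is a common neighbor of u and v; x ∉ B
  have hxB : x ∉ B := fun hxB => key u hu x hxB haxu.symm
  have hxu' : x ≠ u := fun h => G.irrefl (v := u) (h ▸ haxu)
  have hxv' : x ≠ v := fun h => G.irrefl (v := v) (h ▸ haxv)
  have hdom : IsDomSet G (insert x (B \ {u, v})) := by
    intro w
    by_cases hwB : w ∈ B
    · by_cases hwuv : w = u ∨ w = v
      · rcases hwuv with rfl | rfl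
        · exact ⟨x, Set.mem_insert _ _, Or.inr haxu.symm⟩
        · exact ⟨x, Set.mem_insert _ _, Or.inr haxv.symm⟩
      · push_neg at hwuv
        exact ⟨w, Set.mem_insert_of_mem _ ⟨hwB, by simp [hwuv.1, hwuv.2]⟩, Or.inl rfl⟩
    · obtain ⟨u', hu', hadj'⟩ := hB2 w hwB
      have hu'B : u' ∈ B \ {u, v} := by
        refine ⟨hsub2 hu', ?_⟩
        simp only [Set.mem_insert_iff, Set.mem_singleton_iff]
        push_neg
        exact ⟨fun h => hd12 u hu (h ▸ hu'), fun h => hd12 v hv (h ▸ hu')⟩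
      exact ⟨u', Set.mem_insert_of_mem _ hu'B, Or.inr hadj'⟩
  have h1 := hle _ hdom
  have hvBu : v ∈ B \ {u} := ⟨hsub1 hv, fun h => huv h.symm⟩
  have heq : B \ {u, v} = (B \ {u}) \ {v} := by
    ext z; simp [and_assoc, and_comm]; tauto
  have h2 : (B \ {u, v}).ncard = B.ncard - 2 := by
    rw [heq, Set.ncard_diff_singleton_of_mem hvBu,
      Set.ncard_diff_singleton_of_mem (hsub1 hu)]
    omega
  have hxnot : x ∉ B \ {u, v} := fun h => hxB h.1
  have h3 : (insert x (B \ {u, v})).ncard = B.ncard - 2 + 1 := by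
    rw [Set.ncard_insert_of_notMem hxnot, h2]
  have h4 : 2 ≤ B.ncard := by
    have : ({u, v} : Set V).ncard ≤ B.ncard := by
      apply Set.ncard_le_ncard _ (Set.toFinite B)
      rintro z (rfl | rfl)
      exacts [hsub1 hu, hsub1 hv]
    rwa [Set.ncard_pair huv] at this
  omega
end

section
/- Let G be a finite simple graph that is not edgeless. If there exists a permutation π of V(G) such that no separable γ-set of G is effective under π, then G is not a universal fixer, i.e., γ(πG) > γ(G) for some permutation π of V(G). -/
open SimpleGraph

variable {V : Type*}

lemma domNum_le_ncard (G : SimpleGraph V) {D : Set V} (hD : IsDomSet G D) :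
    domNum G ≤ D.ncard :=
  Nat.sInf_le ⟨D, hD, rfl⟩

lemma exists_min_dom (G : SimpleGraph V) :
    ∃ D : Set V, IsDomSet G D ∧ D.ncard = domNum G :=
  Nat.sInf_mem (⟨(Set.univ : Set V).ncard, Set.univ,
    fun v => ⟨v, Set.mem_univ v, Or.inl rfl⟩, rfl⟩ :
    {n | ∃ D : Set V, IsDomSet G D ∧ D.ncard = n}.Nonempty)

lemma domNum_lt_card [Fintype V] (G : SimpleGraph V) {u v : V} (huv : G.Adj u v) :
    domNum G < Fintype.card V := by
  classical
  have hvu : v ≠ u := fun h => G.loopless.irrefl u (h ▸ huv)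
  have hdom : IsDomSet G ({u}ᶜ : Set V) := by
    intro w
    by_cases hw : w = u
    · exact ⟨v, hvu, Or.inr (hw ▸ huv.symm)⟩
    · exact ⟨w, hw, Or.inl rfl⟩
  calc domNum G ≤ ({u}ᶜ : Set V).ncard := domNum_le_ncard G hdom
    _ < Fintype.card V := by
        have h1 : ({u}ᶜ : Set V) ⊂ Set.univ := by
          refine Set.ssubset_univ_iff.mpr fun hc => ?_
          have := Set.eq_univ_iff_forall.mp hc u
          simp at this
        have h2 := Set.ncard_lt_ncard h1 (Set.toFinite _)
        rwa [Set.ncard_univ, Nat.card_eq_fintype_card] at h2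

lemma ncard_sum_split [Fintype V] (D : Set (V ⊕ V)) :
    D.ncard = (Sum.inl ⁻¹' D).ncard + (Sum.inr ⁻¹' D).ncard := by
  classical
  have hD : D = Sum.inl '' (Sum.inl ⁻¹' D) ∪ Sum.inr '' (Sum.inr ⁻¹' D) := by
    ext (x | x) <;> simp
  have hdisj : Disjoint (Sum.inl '' (Sum.inl ⁻¹' D)) (Sum.inr '' (Sum.inr ⁻¹' D)) := by
    rw [Set.disjoint_left]
    rintro x ⟨a, -, rfl⟩ ⟨b, -, hb⟩
    exact Sum.inl_ne_inr hb.symm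
  conv_lhs => rw [hD]
  rw [Set.ncard_union_eq hdisj (Set.toFinite _) (Set.toFinite _),
    Set.ncard_image_of_injective _ Sum.inl_injective,
    Set.ncard_image_of_injective _ Sum.inr_injective]

/-- if `G` is not edgeless and some permutation `π` admits no effective
separable γ-set, then `G` is not a universal fixer. -/
theorem not_universal_fixer_of_no_effective [Fintype V] (G : SimpleGraph V)
    (hedge : ∃ u v : V, G.Adj u v)
    (h : ∃ π : Equiv.Perm V, ∀ A1 A2 : Set V, SepGammaSet G A1 A2 → ¬ Effective G π A1 A2) :
    ∃ π : Equiv.Perm V, domNum G < domNum (prism G π) := by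
  classical
  obtain ⟨π, hπ⟩ := h
  refine ⟨π, ?_⟩
  by_contra hle
  push_neg at hle
  obtain ⟨D, hD, hDcard⟩ := exists_min_dom (prism G π)
  set A1 : Set V := Sum.inl ⁻¹' D with hA1def
  set A2 : Set V := ⇑π ⁻¹' (Sum.inr ⁻¹' D) with hA2def
  obtain ⟨u0, v0, huv0⟩ := hedge
  have hltcard : domNum G < Fintype.card V := domNum_lt_card G huv0
  -- preimage cardinality
  have hA2card : A2.ncard = (Sum.inr ⁻¹' D).ncard := by
    have : A2 = ⇑π.symm '' (Sum.inr ⁻¹' D) := by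
      ext x; simp [hA2def, Equiv.symm_apply_eq, eq_comm]
    rw [this, Set.ncard_image_of_injective _ π.symm.injective]
  have hsplit : D.ncard = A1.ncard + A2.ncard := by
    rw [hA2card]; exact ncard_sum_split D
  -- A1 ∪ A2 dominates G
  have hdomA : IsDomSet G (A1 ∪ A2) := by
    intro v
    obtain ⟨d, hd, hcase⟩ := hD (Sum.inl v)
    match d with
    | Sum.inl u =>
      rcases hcase with heq | hadj
      · exact ⟨u, Or.inl hd, Or.inl (Sum.inl_injective heq)⟩
      · exact ⟨u, Or.inl hd, Or.inr hadj⟩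
    | Sum.inr b =>
      rcases hcase with heq | hadj
      · exact absurd heq (Sum.inr_ne_inl)
      · have hvb : π v = b := hadj
        exact ⟨v, Or.inr (by simp [hA2def, hvb]; exact hvb ▸ hd), Or.inl rfl⟩
  have hγle : domNum G ≤ (A1 ∪ A2).ncard := domNum_le_ncard G hdomA
  have hunion_le : (A1 ∪ A2).ncard ≤ A1.ncard + A2.ncard :=
    Set.ncard_union_le A1 A2
  have hDγ : D.ncard ≤ domNum G := hDcard ▸ hle
  -- chain of equalities
  have hcardeq : (A1 ∪ A2).ncard = domNum G := le_antisymm (by omega) hγle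
  have hsum_eq : (A1 ∪ A2).ncard = A1.ncard + A2.ncard := by omega
  have hDnc : D.ncard = domNum G := by omega
  -- disjointness
  have hdisj : Disjoint A1 A2 := by
    have := Set.ncard_union_add_ncard_inter A1 A2 (Set.toFinite _) (Set.toFinite _)
    have hint : (A1 ∩ A2).ncard = 0 := by omega
    rw [Set.disjoint_iff_inter_eq_empty]
    exact (Set.ncard_eq_zero (Set.toFinite _)).mp hint
  -- A1 nonempty
  have hA1ne : A1.Nonempty := by
    rw [Set.nonempty_iff_ne_empty]
    intro hA1e
    have hBall : ∀ v : V, π v ∈ Sum.inr ⁻¹' D := by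
      intro v
      obtain ⟨d, hd, hcase⟩ := hD (Sum.inl v)
      match d with
      | Sum.inl u => exact absurd hd (by rw [← Set.mem_preimage, ← hA1def, hA1e]; simp)
      | Sum.inr b =>
        rcases hcase with heq | hadj
        · exact absurd heq Sum.inr_ne_inl
        · have : π v = b := hadj
          exact this ▸ hd
    have : A2 = Set.univ := Set.eq_univ_of_forall fun v => hBall v
    have : A2.ncard = Fintype.card V := by rw [this, Set.ncard_univ, Nat.card_eq_fintype_card]
    have hA1c : A1.ncard = 0 := by rw [hA1e]; simp
    omega
  -- A2 nonempty
  have hA2ne : A2.Nonempty := by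
    rw [Set.nonempty_iff_ne_empty]
    intro hA2e
    have hBe : Sum.inr ⁻¹' D = (∅ : Set V) := by
      ext b
      simp only [Set.mem_empty_iff_false, iff_false]
      intro hb
      have : π.symm b ∈ A2 := by
        simp only [hA2def, Set.mem_preimage, Equiv.apply_symm_apply]
        exact hb
      rw [hA2e] at this
      exact this
    have hAall : ∀ v : V, π.symm v ∈ A1 := by
      intro v
      obtain ⟨d, hd, hcase⟩ := hD (Sum.inr v)
      cases d with
      | inr b =>
        exfalso
        have : b ∈ Sum.inr ⁻¹' D := hd
        rw [hBe] at this
        exact this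
      | inl u =>
        rcases hcase with heq | hadj
        · exact absurd heq Sum.inl_ne_inr
        · have hu : π u = v := hadj
          have hsv : π.symm v = u := by rw [← hu, Equiv.symm_apply_apply]
          show Sum.inl (π.symm v) ∈ D
          rw [hsv]
          exact hd
    have hA1univ : A1 = Set.univ :=
      Set.eq_univ_of_forall fun w => by simpa using hAall (π w)
    have : A1.ncard = Fintype.card V := by rw [hA1univ, Set.ncard_univ, Nat.card_eq_fintype_card]
    omega
  -- A1 dominates the complement of A1 ∪ A2
  have hA1dom : ∀ v ∉ A1 ∪ A2, ∃ u ∈ A1, G.Adj u v := by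
    intro v hv
    obtain ⟨d, hd, hcase⟩ := hD (Sum.inl v)
    cases d with
    | inl u =>
      rcases hcase with heq | hadj
      · exact absurd (Or.inl (Sum.inl_injective heq ▸ hd : v ∈ A1)) hv
      · exact ⟨u, hd, hadj⟩
    | inr b =>
      rcases hcase with heq | hadj
      · exact absurd heq Sum.inr_ne_inl
      · exfalso
        apply hv
        right
        have hvb : π v = b := hadj
        show Sum.inr (π v) ∈ D
        rw [hvb]
        exact hd
  have hsep : SepGammaSet G A1 A2 := ⟨hA1ne, hA2ne, hdisj, hdomA, hcardeq, hA1dom⟩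
  -- Effectiveness
  have hπA2 : ⇑π '' A2 = Sum.inr ⁻¹' D := Set.image_preimage_eq _ π.surjective
  have heff : Effective G π A1 A2 := by
    refine ⟨?_, ?_, ?_⟩
    · intro w
      obtain ⟨d, hd, hcase⟩ := hD (Sum.inr w)
      cases d with
      | inl u =>
        rcases hcase with heq | hadj
        · exact absurd heq Sum.inl_ne_inr
        · have hu : π u = w := hadj
          exact ⟨w, ⟨u, Or.inl hd, hu⟩, Or.inl rfl⟩
      | inr b =>
        rcases hcase with heq | hadj
        · have : b = w := Sum.inr_injective heq
          refine ⟨b, ?_, Or.inl this⟩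
          exact Set.image_mono Set.subset_union_right (hπA2.symm ▸ hd : b ∈ ⇑π '' A2)
        · refine ⟨b, ?_, Or.inr hadj⟩
          exact Set.image_mono Set.subset_union_right (hπA2.symm ▸ hd : b ∈ ⇑π '' A2)
    · rw [Set.ncard_image_of_injective _ π.injective]
      exact hcardeq
    · intro w hw
      obtain ⟨d, hd, hcase⟩ := hD (Sum.inr w)
      cases d with
      | inl u =>
        rcases hcase with heq | hadj
        · exact absurd heq Sum.inl_ne_inr
        · exfalso
          exact hw ⟨u, Or.inl hd, hadj⟩
      | inr b =>
        have hbA2 : b ∈ ⇑π '' A2 := hπA2.symm ▸ hd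
        rcases hcase with heq | hadj
        · exfalso
          have : b = w := Sum.inr_injective heq
          exact hw (Set.image_mono Set.subset_union_right (this ▸ hbA2))
        · exact ⟨b, hbA2, hadj⟩
  exact hπ A1 A2 hsep heff
end

section
/- Let G be a finite simple graph, x a C3-free vertex of G with closed neighborhood X = N[x], let π be a permutation of V(G) fixing every vertex outside X, moving every vertex of X, and having no 2-cycles inside X, and let A = A1 ∪ A2 be a separable γ-set of G that is effective under π. Then |A1 ∩ X| ≤ 1 and |A2 ∩ X| ≤ 1; in particular |A ∩ X| ≤ 2. -/
open SimpleGraph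

variable {V : Type*}

lemma key_bound [Fintype V] {G : SimpleGraph V} {D : Set V} (hD : IsDomSet G D) :
    domNum G ≤ D.ncard :=
  Nat.sInf_le ⟨D, hD, rfl⟩

/-- under the hypotheses of the main construction, an effective separable
γ-set meets `X = N[x]` in at most one vertex of `A1` and at most one of `A2`. -/
theorem effective_inter_closedNbhd_small [Fintype V] (G : SimpleGraph V) (x : V)
    (hx : C3Free G x) (π : Equiv.Perm V)
    (hfix : ∀ v ∉ closedNbhd G x, π v = v)
    (hmove : ∀ v ∈ closedNbhd G x, π v ≠ v)
    (h2cyc : ∀ u ∈ closedNbhd G x, ∀ v ∈ closedNbhd G x, π v = u → π u ≠ v)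
    (A1 A2 : Set V) (hsep : SepGammaSet G A1 A2) (heff : Effective G π A1 A2) :
    (A1 ∩ closedNbhd G x).ncard ≤ 1 ∧ (A2 ∩ closedNbhd G x).ncard ≤ 1 ∧
      ((A1 ∪ A2) ∩ closedNbhd G x).ncard ≤ 2 := by
  classical
  set X := closedNbhd G x with hX
  set A := A1 ∪ A2 with hA
  obtain ⟨-, -, hdisj, hdom, hcard, hdom1⟩ := hsep
  obtain ⟨-, -, hdom2⟩ := heff
  have hγ : A.ncard = domNum G := hcard
  -- x dominates everything in X
  have hxdom : ∀ v ∈ X, x = v ∨ G.Adj x v := by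
    intro v hv
    rcases hv with hv | hv
    · exact Or.inl hv.symm
    · exact Or.inr hv
  -- π maps X into X
  have hpiX : ∀ a ∈ X, π a ∈ X := by
    intro a ha
    by_contra h
    have := hfix (π a) h
    have h2 : π a = a := π.injective this
    rw [h2] at h
    exact h ha
  -- cardinality facts
  have hfin : ∀ s : Set V, s.Finite := fun s => s.toFinite
  have hsplit : (A ∩ X).ncard + (A \ X).ncard = A.ncard :=
    Set.ncard_inter_add_ncard_diff_eq_ncard A X (hfin A)
  have hAX : (A ∩ X) = (A1 ∩ X) ∪ (A2 ∩ X) := by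
    rw [hA, Set.union_inter_distrib_right]
  have hAXcard : (A ∩ X).ncard = (A1 ∩ X).ncard + (A2 ∩ X).ncard := by
    rw [hAX]
    exact Set.ncard_union_eq (hdisj.mono Set.inter_subset_left Set.inter_subset_left)
      (hfin _) (hfin _)
  -- first bound : |A1 ∩ X| ≤ 1, via D1 = (A \ X) ∪ {x} ∪ π '' (A2 ∩ X)
  have h1 : (A1 ∩ X).ncard ≤ 1 := by
    set D : Set V := (A \ X) ∪ ({x} ∪ ⇑π '' (A2 ∩ X)) with hD
    have hDdom : IsDomSet G D := by
      intro v
      by_cases hvX : v ∈ X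
      · exact ⟨x, Or.inr (Or.inl rfl), hxdom v hvX⟩
      by_cases hvA : v ∈ A
      · exact ⟨v, Or.inl ⟨hvA, hvX⟩, Or.inl rfl⟩
      -- v ∉ X, v ∉ A : then v ∉ π '' A
      have hvpiA : v ∉ ⇑π '' A := by
        rintro ⟨a, ha, rfl⟩
        by_cases haX : a ∈ X
        · exact hvX (hpiX a haX)
        · rw [hfix a haX] at hvA; exact hvA ha
      obtain ⟨u, hu, hadj⟩ := hdom2 v hvpiA
      obtain ⟨a, ha, rfl⟩ := hu
      by_cases haX : a ∈ X
      · exact ⟨π a, Or.inr (Or.inr ⟨a, ⟨ha, haX⟩, rfl⟩), Or.inr hadj⟩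
      · refine ⟨π a, Or.inl ⟨?_, ?_⟩, Or.inr hadj⟩
        · rw [hfix a haX]; exact Or.inr ha
        · rw [hfix a haX]; exact haX
    have hle : domNum G ≤ D.ncard := key_bound hDdom
    have hDle : D.ncard ≤ (A \ X).ncard + (1 + (A2 ∩ X).ncard) := by
      calc D.ncard ≤ (A \ X).ncard + ({x} ∪ ⇑π '' (A2 ∩ X)).ncard :=
            Set.ncard_union_le _ _
        _ ≤ (A \ X).ncard + (({x} : Set V).ncard + (⇑π '' (A2 ∩ X)).ncard) :=
            Nat.add_le_add_left (Set.ncard_union_le _ _) _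
        _ = (A \ X).ncard + (1 + (A2 ∩ X).ncard) := by
            rw [Set.ncard_singleton, Set.ncard_image_of_injective _ π.injective]
    omega
  -- second bound : |A2 ∩ X| ≤ 1, via D2 = (A \ X) ∪ {x} ∪ (A1 ∩ X)
  have h2 : (A2 ∩ X).ncard ≤ 1 := by
    set D : Set V := (A \ X) ∪ ({x} ∪ (A1 ∩ X)) with hD
    have hDdom : IsDomSet G D := by
      intro v
      by_cases hvX : v ∈ X
      · exact ⟨x, Or.inr (Or.inl rfl), hxdom v hvX⟩
      by_cases hvA : v ∈ A
      · exact ⟨v, Or.inl ⟨hvA, hvX⟩, Or.inl rfl⟩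
      obtain ⟨u, hu, hadj⟩ := hdom1 v hvA
      by_cases huX : u ∈ X
      · exact ⟨u, Or.inr (Or.inr ⟨hu, huX⟩), Or.inr hadj⟩
      · exact ⟨u, Or.inl ⟨Or.inl hu, huX⟩, Or.inr hadj⟩
    have hle : domNum G ≤ D.ncard := key_bound hDdom
    have hDle : D.ncard ≤ (A \ X).ncard + (1 + (A1 ∩ X).ncard) := by
      calc D.ncard ≤ (A \ X).ncard + ({x} ∪ (A1 ∩ X)).ncard :=
            Set.ncard_union_le _ _
        _ ≤ (A \ X).ncard + (({x} : Set V).ncard + (A1 ∩ X).ncard) :=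
            Nat.add_le_add_left (Set.ncard_union_le _ _) _
        _ = (A \ X).ncard + (1 + (A1 ∩ X).ncard) := by rw [Set.ncard_singleton]
    omega
  refine ⟨h1, h2, ?_⟩
  calc ((A1 ∪ A2) ∩ X).ncard = (A ∩ X).ncard := rfl
    _ = (A1 ∩ X).ncard + (A2 ∩ X).ncard := hAXcard
    _ ≤ 2 := by omega
end

section
/- Let G be a finite simple graph, x a C3-free vertex of G with closed neighborhood X = N[x], and A = A1 ∪ A2 a separable γ-set of G with A1 dominating V(G) − A. If A ∩ X = {v} for a single vertex v and v ∈ A2, then A is not effective under any permutation π of V(G) that fixes every vertex of V(G) − X pointwise and moves every vertex of X. -/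
open SimpleGraph

variable {V : Type*}

/-- Case 1(2): if `A ∩ X = {v}` with `v ∈ A2`, then `A` is not effective
under any permutation fixing `V - X` pointwise and moving every vertex of `X`. -/
theorem case_one_vertex_in_A2 [Fintype V] (G : SimpleGraph V) (x : V) (hx : C3Free G x)
    (A1 A2 : Set V) (hsep : SepGammaSet G A1 A2) (v : V)
    (hAX : (A1 ∪ A2) ∩ closedNbhd G x = {v}) (hv : v ∈ A2) :
    ∀ π : Equiv.Perm V, (∀ w ∉ closedNbhd G x, π w = w) →
      (∀ w ∈ closedNbhd G x, π w ≠ w) → ¬ Effective G π A1 A2 := by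
  intro π hfix hmove heff
  obtain ⟨hA1ne, hA2ne, hdisj, hdom, hcard, hsepdom⟩ := hsep
  obtain ⟨E1, E2, E3⟩ := heff
  have hxX : x ∈ closedNbhd G x := Set.mem_insert _ _
  -- Step 1: v = x
  have hvx : v = x := by
    by_contra hne
    have hxA : x ∉ A1 ∪ A2 := by
      intro h
      have hmem : x ∈ (A1 ∪ A2) ∩ closedNbhd G x := ⟨h, hxX⟩
      rw [hAX] at hmem
      exact hne (Set.mem_singleton_iff.mp hmem).symm
    obtain ⟨u, huA1, huadj⟩ := hsepdom x hxA
    have huX : u ∈ closedNbhd G x := Set.mem_insert_of_mem _ huadj.symm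
    have hmem : u ∈ (A1 ∪ A2) ∩ closedNbhd G x := ⟨Or.inl huA1, huX⟩
    rw [hAX] at hmem
    have hu : u = v := Set.mem_singleton_iff.mp hmem
    rw [hu] at huA1
    exact Set.disjoint_left.mp hdisj huA1 hv
  subst hvx
  -- now hv : v ∈ A2 with v = v renamed; hAX : (A1 ∪ A2) ∩ X = {x}
  have hyx : π v ≠ v := hmove v hxX
  have hyX : π v ∈ closedNbhd G v := by
    by_contra h
    exact hyx (π.injective (hfix (π v) h))
  have hyA : π v ∉ A1 ∪ A2 := by
    intro h
    have hmem : π v ∈ (A1 ∪ A2) ∩ closedNbhd G v := ⟨h, hyX⟩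
    rw [hAX] at hmem
    exact hyx (Set.mem_singleton_iff.mp hmem)
  obtain ⟨u, huA1, huy⟩ := hsepdom (π v) hyA
  have huX : u ∉ closedNbhd G v := by
    intro h
    have hmem : u ∈ (A1 ∪ A2) ∩ closedNbhd G v := ⟨Or.inl huA1, h⟩
    rw [hAX] at hmem
    have hu : u = v := Set.mem_singleton_iff.mp hmem
    rw [hu] at huA1
    exact Set.disjoint_left.mp hdisj huA1 hv
  have huπ : π u = u := hfix u huX
  have huP : u ∈ ⇑π '' (A1 ∪ A2) := ⟨u, Or.inl huA1, huπ⟩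
  have hyP : π v ∈ ⇑π '' (A1 ∪ A2) := ⟨v, Or.inr hv, rfl⟩
  have hyu : π v ≠ u := by
    intro h
    rw [h] at hyX
    exact huX hyX
  -- the smaller dominating set
  have hDdom : IsDomSet G ((⇑π '' (A1 ∪ A2)) \ {u}) := by
    intro w
    by_cases hwP : w ∈ ⇑π '' (A1 ∪ A2)
    · by_cases hwu : w = u
      · subst hwu
        exact ⟨π v, ⟨hyP, by simpa using hyu⟩, Or.inr huy.symm⟩
      · exact ⟨w, ⟨hwP, by simpa using hwu⟩, Or.inl rfl⟩
    · obtain ⟨z, hz2, hzw⟩ := E3 w hwP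
      have hzu : z ≠ u := by
        obtain ⟨a, ha2, rfl⟩ := hz2
        by_cases haX : a ∈ closedNbhd G v
        · have hmem : a ∈ (A1 ∪ A2) ∩ closedNbhd G v := ⟨Or.inr ha2, haX⟩
          rw [hAX] at hmem
          rw [Set.mem_singleton_iff.mp hmem]
          exact hyu
        · rw [hfix a haX]
          intro h
          rw [h] at ha2
          exact Set.disjoint_left.mp hdisj huA1 ha2
      have hzP : z ∈ ⇑π '' (A1 ∪ A2) :=
        Set.image_mono Set.subset_union_right hz2
      exact ⟨z, ⟨hzP, by simpa using hzu⟩, Or.inr hzw⟩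
  -- cardinality contradiction
  have hPfin : (⇑π '' (A1 ∪ A2)).Finite := Set.toFinite _
  have hd1 : ((⇑π '' (A1 ∪ A2)) \ {u}).ncard = (⇑π '' (A1 ∪ A2)).ncard - 1 :=
    Set.ncard_diff_singleton_of_mem huP
  have hle : domNum G ≤ ((⇑π '' (A1 ∪ A2)) \ {u}).ncard :=
    Nat.sInf_le ⟨(⇑π '' (A1 ∪ A2)) \ {u}, hDdom, rfl⟩
  have hpos : 0 < (⇑π '' (A1 ∪ A2)).ncard :=
    (Set.ncard_pos hPfin).mpr ⟨u, huP⟩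
  rw [hd1, E2] at hle
  rw [E2] at hpos
  omega
end
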